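/- arXiv:1705.00837 — 2 statements merged into one kernel-verified Lean document; each statement's English description precedes it below -/
import Mathlib

section
/- Let α be a strongly continuous action of a locally compact group G on a von Neumann algebra M (i.e., s ↦ α_s is a homomorphism into Aut(M) with ‖φ∘α_s − φ‖ → 0 for all normal states φ as s → e). For f ∈ L^1(G) and a norm-bounded sequence (x^ν) in M, the averaged sequence (α_f(x^ν)), where α_f(y) = ∫_G f(s) α_s(y) ds, is (α, ω)-equicontinuous. -/
open MeasureTheory Filter Topology

open Pointwise ContinuousLinearMap
open scoped InnerProductSpace ComplexConjugate

set_option linter.unusedSectionVars false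
set_option maxHeartbeats 1000000
set_option synthInstance.maxHeartbeats 400000

section Impl

variable {H : Type*} [NormedAddCommGroup H] [InnerProductSpace ℂ H] [CompleteSpace H]

/-- The rank-one operator `w ↦ ⟪ξ, w⟫ • ζ`. -/
noncomputable def rk (ξ ζ : H) : H →L[ℂ] H := (innerSL ℂ ξ).smulRight ζ

lemma rk_apply (ξ ζ w : H) : rk ξ ζ w = ⟪ξ, w⟫_ℂ • ζ := rfl

lemma comp_rk (x : H →L[ℂ] H) (ξ ζ : H) : x * rk ξ ζ = rk ξ (x ζ) := by
  ext w; simp [rk_apply, ContinuousLinearMap.mul_apply, _root_.map_smul]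

lemma rk_star (ξ ζ : H) : star (rk ξ ζ) = rk ζ ξ := by
  rw [ContinuousLinearMap.star_eq_adjoint]
  symm
  rw [ContinuousLinearMap.eq_adjoint_iff]
  intro a b
  simp [rk_apply, inner_smul_left, inner_smul_right]
  ring

lemma rk_mul_rk (a b c d : H) : rk a b * rk c d = ⟪a, d⟫_ℂ • rk c b := by
  ext w; simp [rk_apply, ContinuousLinearMap.mul_apply, _root_.map_smul, smul_smul, mul_comm]

lemma rk_add (ξ a b : H) : rk ξ (a + b) = rk ξ a + rk ξ b := by
  ext w; simp [rk_apply, smul_add]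

lemma rk_smul (ξ : H) (c : ℂ) (a : H) : rk ξ (c • a) = c • rk ξ a := by
  ext w; simp [rk_apply, smul_smul, mul_comm]

/-- Every `⋆`-algebra automorphism of `B(H)` is spatially implemented:
`β x = u ∘ x ∘ v` for continuous linear maps `u`, `v`. -/
theorem exists_impl (β : (H →L[ℂ] H) ≃⋆ₐ[ℂ] (H →L[ℂ] H)) :
    ∃ u v : H →L[ℂ] H, ∀ (x : H →L[ℂ] H) (ξ : H), β x ξ = u (x (v ξ)) := by
  by_cases hH : ∀ ξ : H, ξ = 0
  · exact ⟨0, 0, fun x ξ => (hH _).trans (hH _).symm⟩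
  push_neg at hH
  obtain ⟨ξ₁, hξ₁⟩ := hH
  obtain ⟨ξ₀, hξ₀⟩ : ∃ ξ₀ : H, ‖ξ₀‖ = 1 := ⟨‖ξ₁‖⁻¹ • ξ₁, norm_smul_inv_norm hξ₁⟩
  have hinner₀ : ⟪ξ₀, ξ₀⟫_ℂ = 1 := by
    rw [inner_self_eq_norm_sq_to_K, hξ₀]; norm_num
  have hpξ₀ : rk ξ₀ ξ₀ ξ₀ = ξ₀ := by rw [rk_apply, hinner₀, one_smul]
  have hpp : rk ξ₀ ξ₀ * rk ξ₀ ξ₀ = rk ξ₀ ξ₀ := by rw [comp_rk, hpξ₀]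
  have hξ₀ne : ξ₀ ≠ 0 := by
    intro h; rw [h] at hξ₀; simp at hξ₀
  have hqq : β (rk ξ₀ ξ₀) * β (rk ξ₀ ξ₀) = β (rk ξ₀ ξ₀) := by rw [← map_mul, hpp]
  have hq0 : β (rk ξ₀ ξ₀) ≠ 0 := by
    intro h
    have hp0 : rk ξ₀ ξ₀ = (0 : H →L[ℂ] H) := by
      have := congrArg β.symm h
      simpa using this
    rw [hp0] at hpξ₀
    exact hξ₀ne (by simpa using hpξ₀.symm)
  obtain ⟨η₁, hη₁⟩ : ∃ η₁, β (rk ξ₀ ξ₀) η₁ ≠ 0 := by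
    by_contra h
    push_neg at h
    exact hq0 (ContinuousLinearMap.ext fun w => by simpa using h w)
  obtain ⟨η, hηdef⟩ : ∃ η : H, η = ‖β (rk ξ₀ ξ₀) η₁‖⁻¹ • β (rk ξ₀ ξ₀) η₁ := ⟨_, rfl⟩
  have hη : ‖η‖ = 1 := by rw [hηdef]; exact norm_smul_inv_norm hη₁
  have hinnerη : ⟪η, η⟫_ℂ = 1 := by
    rw [inner_self_eq_norm_sq_to_K, hη]; norm_num
  have hqη : β (rk ξ₀ ξ₀) η = η := by
    rw [hηdef, map_smul_of_tower]
    congr 1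
    have h1 : β (rk ξ₀ ξ₀) (β (rk ξ₀ ξ₀) η₁) = (β (rk ξ₀ ξ₀) * β (rk ξ₀ ξ₀)) η₁ := rfl
    rw [h1, hqq]
  have hUU : ∀ ζ₁ ζ₂ : H, ⟪β (rk ξ₀ ζ₁) η, β (rk ξ₀ ζ₂) η⟫_ℂ = ⟪ζ₁, ζ₂⟫_ℂ := by
    intro ζ₁ ζ₂
    calc ⟪β (rk ξ₀ ζ₁) η, β (rk ξ₀ ζ₂) η⟫_ℂ
        = ⟪η, adjoint (β (rk ξ₀ ζ₁)) (β (rk ξ₀ ζ₂) η)⟫_ℂ := by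
          rw [ContinuousLinearMap.adjoint_inner_right]
      _ = ⟪η, (β (rk ζ₁ ξ₀) * β (rk ξ₀ ζ₂)) η⟫_ℂ := by
          rw [← ContinuousLinearMap.star_eq_adjoint, ← map_star, rk_star]; rfl
      _ = ⟪η, (⟪ζ₁, ζ₂⟫_ℂ • β (rk ξ₀ ξ₀)) η⟫_ℂ := by
          rw [← map_mul, rk_mul_rk, _root_.map_smul]
      _ = ⟪ζ₁, ζ₂⟫_ℂ := by
          rw [ContinuousLinearMap.smul_apply, hqη, inner_smul_right, hinnerη, mul_one]
  have hβmul : ∀ (a b : H →L[ℂ] H) (w : H), β (a * b) w = β a (β b w) := by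
    intro a b w; rw [map_mul]; rfl
  let Ulin : H →ₗ[ℂ] H :=
    { toFun := fun ζ => β (rk ξ₀ ζ) η
      map_add' := fun a b => by simp only [rk_add, map_add, ContinuousLinearMap.add_apply]
      map_smul' := fun c a => by
        simp only [rk_smul, _root_.map_smul, ContinuousLinearMap.smul_apply, RingHom.id_apply] }
  have hUnorm : ∀ ζ, ‖Ulin ζ‖ ≤ 1 * ‖ζ‖ := by
    intro ζ
    have h := hUU ζ ζ
    rw [inner_self_eq_norm_sq_to_K, inner_self_eq_norm_sq_to_K] at h
    have h' : ‖Ulin ζ‖ ^ 2 = ‖ζ‖ ^ 2 := by exact_mod_cast h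
    rw [one_mul]
    exact le_of_eq ((sq_eq_sq₀ (norm_nonneg _) (norm_nonneg _)).mp h')
  obtain ⟨u, hu⟩ : ∃ u : H →L[ℂ] H, ∀ ζ, u ζ = β (rk ξ₀ ζ) η :=
    ⟨Ulin.mkContinuous 1 hUnorm, fun _ => rfl⟩
  have huinner : ∀ ζ₁ ζ₂, ⟪u ζ₁, u ζ₂⟫_ℂ = ⟪ζ₁, ζ₂⟫_ℂ := by
    intro ζ₁ ζ₂; rw [hu, hu]; exact hUU ζ₁ ζ₂
  have hadj : ∀ ζ, adjoint u (u ζ) = ζ := by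
    intro ζ
    refine ext_inner_right ℂ fun w => ?_
    rw [ContinuousLinearMap.adjoint_inner_left]
    exact huinner ζ w
  have hcomm : ∀ (x : H →L[ℂ] H) (ζ : H), β x (u ζ) = u (x ζ) := by
    intro x ζ
    rw [hu, hu, ← hβmul, comp_rk]
  have hsurj : ∀ ξ : H, ∃ ζ, u ζ = ξ := by
    intro ξ
    refine ⟨β.symm (rk η ξ) ξ₀, ?_⟩
    rw [hu, ← comp_rk, hβmul, β.apply_symm_apply]
    rw [hqη, rk_apply, hinnerη, one_smul]
  refine ⟨u, adjoint u, fun x ξ => ?_⟩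
  obtain ⟨ζ, rfl⟩ := hsurj ξ
  rw [hadj, hcomm]

end Impl

section Shift

variable {G : Type*} [TopologicalSpace G] [Group G] [IsTopologicalGroup G]
    [LocallyCompactSpace G] [T2Space G] [SecondCountableTopology G]
    [MeasurableSpace G] [BorelSpace G]

lemma integrable_shift (μ : Measure G) [μ.IsHaarMeasure] {E : Type*} [NormedAddCommGroup E]
    {f : G → E} (hf : Integrable f μ) (t : G) : Integrable (fun s => f (t * s)) μ :=
  ((measurePreserving_mul_left μ t).integrable_comp_emb
    (MeasurableEquiv.mulLeft t).measurableEmbedding).mpr hf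

lemma tendsto_shift_cont (μ : Measure G) [μ.IsHaarMeasure] (g : G → ℂ) (hg : Continuous g)
    (hsupp : HasCompactSupport g) :
    Tendsto (fun t : G => ∫ s, ‖g (t⁻¹ * s) - g s‖ ∂μ) (𝓝 1) (𝓝 0) := by
  obtain ⟨K₀, hK₀c, hK₀mem⟩ := exists_compact_mem_nhds (1 : G)
  obtain ⟨Mg, hMg⟩ := hsupp.exists_bound_of_continuous hg
  set K : Set G := K₀ * tsupport g ∪ tsupport g with hK
  have hKc : IsCompact K := (hK₀c.mul hsupp).union hsupp
  have h0 : (0 : ℝ) = ∫ (_ : G), (0:ℝ) ∂μ := by simp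
  rw [h0]
  apply tendsto_integral_filter_of_dominated_convergence (K.indicator fun _ => 2 * Mg)
  · filter_upwards with t
    exact (((hg.comp (continuous_mul_left t⁻¹)).sub hg).norm).aestronglyMeasurable
  · filter_upwards [hK₀mem] with t ht
    filter_upwards with s
    rw [norm_norm]
    by_cases hs : s ∈ K
    · rw [Set.indicator_of_mem hs]
      calc ‖g (t⁻¹ * s) - g s‖ ≤ ‖g (t⁻¹ * s)‖ + ‖g s‖ := norm_sub_le _ _
        _ ≤ Mg + Mg := add_le_add (hMg _) (hMg _)
        _ = 2 * Mg := by ring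
    · rw [Set.indicator_of_notMem hs]
      have h1 : g s = 0 := by
        apply image_eq_zero_of_notMem_tsupport
        exact fun hmem => hs (Or.inr hmem)
      have h2 : g (t⁻¹ * s) = 0 := by
        apply image_eq_zero_of_notMem_tsupport
        intro hmem
        apply hs
        left
        have : s = t * (t⁻¹ * s) := by group
        rw [this]
        exact Set.mul_mem_mul ht hmem
      simp [h1, h2]
  · refine (integrableOn_const hKc.measure_lt_top.ne).integrable_indicator
      hKc.isClosed.measurableSet
  · filter_upwards with s
    have hcont : Continuous fun t : G => ‖g (t⁻¹ * s) - g s‖ :=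
      ((hg.comp ((continuous_inv).mul continuous_const)).sub continuous_const).norm
    have := hcont.tendsto 1
    simpa using this

lemma tendsto_shift (μ : Measure G) [μ.IsHaarMeasure] (f : G → ℂ) (hf : Integrable f μ) :
    Tendsto (fun t : G => ∫ s, ‖f (t⁻¹ * s) - f s‖ ∂μ) (𝓝 1) (𝓝 0) := by
  rw [Metric.tendsto_nhds]
  intro ε hε
  obtain ⟨g, gsupp, hgε, gcont, gint⟩ :=
    hf.exists_hasCompactSupport_integral_sub_le (by positivity : (0:ℝ) < ε/4)
  have hmid := tendsto_shift_cont μ g gcont gsupp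
  have hmid' : ∀ᶠ t in 𝓝 (1:G), (∫ s, ‖g (t⁻¹ * s) - g s‖ ∂μ) < ε/4 :=
    hmid.eventually_lt_const (by positivity)
  filter_upwards [hmid'] with t ht
  have hnonneg : (0:ℝ) ≤ ∫ s, ‖f (t⁻¹ * s) - f s‖ ∂μ :=
    integral_nonneg fun s => norm_nonneg _
  rw [Real.dist_eq, sub_zero, abs_of_nonneg hnonneg]
  have hfs := integrable_shift μ hf t⁻¹
  have hgs := integrable_shift μ gint t⁻¹
  have hA : Integrable (fun s => ‖f (t⁻¹ * s) - g (t⁻¹ * s)‖) μ := (hfs.sub hgs).norm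
  have hB : Integrable (fun s => ‖g (t⁻¹ * s) - g s‖) μ := (hgs.sub gint).norm
  have hCC : Integrable (fun s => ‖g s - f s‖) μ := (gint.sub hf).norm
  have hmono : (∫ s, ‖f (t⁻¹ * s) - f s‖ ∂μ)
      ≤ ∫ s, (‖f (t⁻¹ * s) - g (t⁻¹ * s)‖ + ‖g (t⁻¹ * s) - g s‖ + ‖g s - f s‖) ∂μ := by
    apply integral_mono ((hfs.sub hf).norm) ((hA.add hB).add hCC)
    intro s
    calc ‖f (t⁻¹ * s) - f s‖ = dist (f (t⁻¹ * s)) (f s) := (dist_eq_norm _ _).symm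
      _ ≤ dist (f (t⁻¹ * s)) (g (t⁻¹ * s)) + dist (g (t⁻¹ * s)) (g s) + dist (g s) (f s) :=
          dist_triangle4 _ _ _ _
      _ = ‖f (t⁻¹ * s) - g (t⁻¹ * s)‖ + ‖g (t⁻¹ * s) - g s‖ + ‖g s - f s‖ := by
          rw [dist_eq_norm, dist_eq_norm, dist_eq_norm]
  have hsplit : (∫ s, (‖f (t⁻¹ * s) - g (t⁻¹ * s)‖ + ‖g (t⁻¹ * s) - g s‖ + ‖g s - f s‖) ∂μ)
      = (∫ s, ‖f (t⁻¹ * s) - g (t⁻¹ * s)‖ ∂μ) + (∫ s, ‖g (t⁻¹ * s) - g s‖ ∂μ)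
        + (∫ s, ‖g s - f s‖ ∂μ) := by
    have e2 := integral_add (μ := μ) (hA.add hB) hCC
    have e1 := integral_add (μ := μ) hA hB
    simp only [Pi.add_apply] at e2 e1
    rw [e1] at e2
    exact e2
  have hshift_eq : (∫ s, ‖f (t⁻¹ * s) - g (t⁻¹ * s)‖ ∂μ) = ∫ s, ‖f s - g s‖ ∂μ :=
    integral_mul_left_eq_self (fun s => ‖f s - g s‖) t⁻¹
  have hrev : (∫ s, ‖g s - f s‖ ∂μ) = ∫ s, ‖f s - g s‖ ∂μ := by
    simp_rw [norm_sub_rev]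
  calc (∫ s, ‖f (t⁻¹ * s) - f s‖ ∂μ)
      ≤ _ := hmono
    _ = (∫ s, ‖f s - g s‖ ∂μ) + (∫ s, ‖g (t⁻¹ * s) - g s‖ ∂μ) + (∫ s, ‖f s - g s‖ ∂μ) := by
        rw [hsplit, hshift_eq, hrev]
    _ < ε := by linarith

end Shift
/-- A norm-bounded sequence `(x ν)` in `B(H)` is `(α, ω)`-equicontinuous if for every
σ-strong* neighbourhood of `0` (tested by the seminorms `x ↦ ‖xξ‖ + ‖x*ξ‖`) there are a
neighbourhood `U` of the identity of `G` and `A ∈ ω` with `α_s(x ν) - x ν` in that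
neighbourhood for all `s ∈ U`, `ν ∈ A`. -/
def AOEquicontinuous {G H : Type*} [TopologicalSpace G] [Group G]
    [NormedAddCommGroup H] [InnerProductSpace ℂ H] [CompleteSpace H]
    (α : G → ((H →L[ℂ] H) ≃⋆ₐ[ℂ] (H →L[ℂ] H))) (ω : Ultrafilter ℕ)
    (x : ℕ → (H →L[ℂ] H)) : Prop :=
  (∃ C, ∀ ν, ‖x ν‖ ≤ C) ∧
  ∀ ε > (0:ℝ), ∀ ξ : H, ∃ U ∈ nhds (1 : G), ∃ A ∈ ω, ∀ s ∈ U, ∀ ν ∈ A,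
    ‖(α s (x ν) - x ν) ξ‖ < ε ∧ ‖(star (α s (x ν) - x ν)) ξ‖ < ε

/-- for a strongly continuous action `α` of a locally compact group `G` on a
von Neumann algebra `M` and `f ∈ L¹(G)`, the averaged sequence `(α_f(x ν))`, where
`α_f(y) = ∫ f(s) α_s(y) ds`, of any norm-bounded sequence `(x ν)` in `M` is
`(α, ω)`-equicontinuous. -/
theorem statement11 {G H : Type*} [TopologicalSpace G] [Group G] [IsTopologicalGroup G]
    [LocallyCompactSpace G] [T2Space G] [SecondCountableTopology G]
    [MeasurableSpace G] [BorelSpace G]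
    (μ : Measure G) [μ.IsHaarMeasure]
    [NormedAddCommGroup H] [InnerProductSpace ℂ H] [CompleteSpace H]
    (M : VonNeumannAlgebra H)
    (α : G → ((H →L[ℂ] H) ≃⋆ₐ[ℂ] (H →L[ℂ] H)))
    (hhom : ∀ s t x, α (s * t) x = α s (α t x))
    (hone : ∀ x, α 1 x = x)
    (hiso : ∀ s x, ‖α s x‖ = ‖x‖)
    (hM : ∀ s, ∀ m ∈ M, α s m ∈ M)
    (hcont : ∀ (x : H →L[ℂ] H) (ξ : H), Continuous fun s => (α s x) ξ)
    (ω : Ultrafilter ℕ) (hfree : (Filter.cofinite : Filter ℕ) ≤ (ω : Filter ℕ))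
    (f : G → ℂ) (hf : Integrable f μ)
    (x : ℕ → (H →L[ℂ] H)) (hx : ∀ ν, x ν ∈ M) (C : ℝ) (hC : ∀ ν, ‖x ν‖ ≤ C)
    (y : ℕ → (H →L[ℂ] H))
    (hy : ∀ ν (ξ : H), y ν ξ = ∫ s, f s • (α s (x ν)) ξ ∂μ) :
    AOEquicontinuous α ω y := by
  have hC0 : (0:ℝ) ≤ C := le_trans (norm_nonneg (x 0)) (hC 0)
  have hint : ∀ (g : G → ℂ), Integrable g μ → ∀ (z : H →L[ℂ] H), ‖z‖ ≤ C → ∀ ξ : H,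
      Integrable (fun s => g s • (α s z) ξ) μ := by
    intro g hg z hz ξ
    refine Integrable.mono' (hg.norm.mul_const (C * ‖ξ‖))
      (hg.aestronglyMeasurable.smul (hcont z ξ).aestronglyMeasurable) ?_
    filter_upwards with s
    rw [norm_smul]
    apply mul_le_mul_of_nonneg_left _ (norm_nonneg _)
    calc ‖(α s z) ξ‖ ≤ ‖α s z‖ * ‖ξ‖ := (α s z).le_opNorm ξ
      _ ≤ C * ‖ξ‖ := by
          apply mul_le_mul_of_nonneg_right _ (norm_nonneg _)
          rw [hiso]; exact hz
  have main_est : ∀ (g : G → ℂ), Integrable g μ → ∀ (z : H →L[ℂ] H), ‖z‖ ≤ C →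
      ∀ (w : H →L[ℂ] H), (∀ ξ : H, w ξ = ∫ s, g s • (α s z) ξ ∂μ) → ∀ (t : G) (ξ : H),
      ‖(α t w - w) ξ‖ ≤ (∫ s, ‖g (t⁻¹ * s) - g s‖ ∂μ) * (C * ‖ξ‖) := by
    intro g hg z hz w hw t ξ
    obtain ⟨u, v, huv⟩ := exists_impl (α t)
    have hshift_int : Integrable (fun s => g (t⁻¹ * s)) μ := integrable_shift μ hg t⁻¹
    have step1 : (α t w) ξ = ∫ s, g s • (α (t * s) z) ξ ∂μ := by
      rw [huv w ξ, hw (v ξ)]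
      rw [← ContinuousLinearMap.integral_comp_comm u (hint g hg z hz (v ξ))]
      congr 1
      ext s
      rw [ContinuousLinearMap.map_smul]
      congr 1
      rw [hhom]
      exact (huv (α s z) ξ).symm
    have step2 : (∫ s, g s • (α (t * s) z) ξ ∂μ) = ∫ s, g (t⁻¹ * s) • (α s z) ξ ∂μ := by
      have h := integral_mul_left_eq_self (μ := μ) (fun s => g (t⁻¹ * s) • (α s z) ξ) t
      rw [← h]
      simp only [inv_mul_cancel_left]
    have step3 : (α t w - w) ξ = ∫ s, (g (t⁻¹ * s) - g s) • (α s z) ξ ∂μ := by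
      rw [ContinuousLinearMap.sub_apply, step1, step2, hw ξ,
        ← integral_sub (hint _ hshift_int z hz ξ) (hint g hg z hz ξ)]
      congr 1
      ext s
      rw [sub_smul]
    rw [step3]
    calc ‖∫ s, (g (t⁻¹ * s) - g s) • (α s z) ξ ∂μ‖
        ≤ ∫ s, ‖(g (t⁻¹ * s) - g s) • (α s z) ξ‖ ∂μ := norm_integral_le_integral_norm _
      _ ≤ ∫ s, ‖g (t⁻¹ * s) - g s‖ * (C * ‖ξ‖) ∂μ := by
          apply integral_mono ((hint _ (hshift_int.sub hg) z hz ξ).norm)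
            (((hshift_int.sub hg).norm).mul_const _)
          intro s
          simp only [Pi.sub_apply]
          rw [norm_smul]
          apply mul_le_mul_of_nonneg_left _ (norm_nonneg _)
          calc ‖(α s z) ξ‖ ≤ ‖α s z‖ * ‖ξ‖ := (α s z).le_opNorm ξ
            _ ≤ C * ‖ξ‖ := by
                apply mul_le_mul_of_nonneg_right _ (norm_nonneg _)
                rw [hiso]; exact hz
      _ = (∫ s, ‖g (t⁻¹ * s) - g s‖ ∂μ) * (C * ‖ξ‖) := integral_mul_const _ _
  have hfconj : Integrable (fun s => (starRingEnd ℂ) (f s)) μ :=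
    (Complex.conjCLE.toContinuousLinearMap).integrable_comp hf
  have hstar : ∀ ν (ξ : H), (star (y ν)) ξ
      = ∫ s, (starRingEnd ℂ) (f s) • (α s (star (x ν))) ξ ∂μ := by
    intro ν ξ
    apply ext_inner_left ℂ
    intro w
    have hxint := hint f hf (x ν) (hC ν) w
    have hsint : Integrable (fun s => (starRingEnd ℂ) (f s) • (α s (star (x ν))) ξ) μ := by
      refine hint _ hfconj (star (x ν)) ?_ ξ
      rw [norm_star]; exact hC ν
    calc ⟪w, (star (y ν)) ξ⟫_ℂ
        = ⟪(y ν) w, ξ⟫_ℂ := by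
          rw [ContinuousLinearMap.star_eq_adjoint, ContinuousLinearMap.adjoint_inner_right]
      _ = (starRingEnd ℂ) ⟪ξ, (y ν) w⟫_ℂ := (inner_conj_symm _ _).symm
      _ = (starRingEnd ℂ) (∫ s, ⟪ξ, f s • (α s (x ν)) w⟫_ℂ ∂μ) := by
          rw [hy ν w, integral_inner hxint ξ]
      _ = ∫ s, (starRingEnd ℂ) ⟪ξ, f s • (α s (x ν)) w⟫_ℂ ∂μ := (integral_conj).symm
      _ = ∫ s, ⟪w, (starRingEnd ℂ) (f s) • (α s (star (x ν))) ξ⟫_ℂ ∂μ := by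
          congr 1
          ext s
          rw [inner_conj_symm, inner_smul_left, ← ContinuousLinearMap.adjoint_inner_right,
            ← ContinuousLinearMap.star_eq_adjoint, ← map_star, inner_smul_right]
      _ = ⟪w, ∫ s, (starRingEnd ℂ) (f s) • (α s (star (x ν))) ξ ∂μ⟫_ℂ :=
          integral_inner hsint w
  have hyb : ∀ ν, ‖y ν‖ ≤ (∫ s, ‖f s‖ ∂μ) * C := by
    intro ν
    apply ContinuousLinearMap.opNorm_le_bound _
      (mul_nonneg (integral_nonneg fun s => norm_nonneg _) hC0)
    intro ξ
    rw [hy]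
    calc ‖∫ s, f s • (α s (x ν)) ξ ∂μ‖
        ≤ ∫ s, ‖f s • (α s (x ν)) ξ‖ ∂μ := norm_integral_le_integral_norm _
      _ ≤ ∫ s, ‖f s‖ * (C * ‖ξ‖) ∂μ := by
          apply integral_mono ((hint f hf (x ν) (hC ν) ξ).norm) (hf.norm.mul_const _)
          intro s
          simp only [Pi.sub_apply]
          rw [norm_smul]
          apply mul_le_mul_of_nonneg_left _ (norm_nonneg _)
          calc ‖(α s (x ν)) ξ‖ ≤ ‖α s (x ν)‖ * ‖ξ‖ := (α s (x ν)).le_opNorm ξ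
            _ ≤ C * ‖ξ‖ := by
                apply mul_le_mul_of_nonneg_right _ (norm_nonneg _)
                rw [hiso]; exact hC ν
      _ = (∫ s, ‖f s‖ ∂μ) * (C * ‖ξ‖) := integral_mul_const _ _
      _ = ((∫ s, ‖f s‖ ∂μ) * C) * ‖ξ‖ := by ring
  refine ⟨⟨_, hyb⟩, ?_⟩
  intro ε hε ξ
  have hI := tendsto_shift μ f hf
  have h2 : Tendsto (fun t => (∫ s, ‖f (t⁻¹ * s) - f s‖ ∂μ) * (C * ‖ξ‖)) (𝓝 1) (𝓝 0) := by
    simpa using hI.mul_const (C * ‖ξ‖)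
  have hev : ∀ᶠ t in 𝓝 (1:G), (∫ s, ‖f (t⁻¹ * s) - f s‖ ∂μ) * (C * ‖ξ‖) < ε :=
    h2.eventually_lt_const hε
  refine ⟨{t | (∫ s, ‖f (t⁻¹ * s) - f s‖ ∂μ) * (C * ‖ξ‖) < ε}, hev, Set.univ,
    Filter.univ_mem, fun s hs ν _ => ⟨?_, ?_⟩⟩
  · exact lt_of_le_of_lt (main_est f hf (x ν) (hC ν) (y ν) (hy ν) s ξ) hs
  · have h3 : star (α s (y ν) - y ν) = α s (star (y ν)) - star (y ν) := by
      rw [star_sub, map_star]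
    rw [h3]
    have h4 := main_est _ hfconj (star (x ν)) (by rw [norm_star]; exact hC ν)
      (star (y ν)) (hstar ν) s ξ
    have h5 : (∫ r, ‖(starRingEnd ℂ) (f (s⁻¹ * r)) - (starRingEnd ℂ) (f r)‖ ∂μ)
        = ∫ r, ‖f (s⁻¹ * r) - f r‖ ∂μ := by
      congr 1
      ext r
      rw [← map_sub, RCLike.norm_conj]
    rw [h5] at h4
    exact lt_of_le_of_lt h4 hs
end

section
/- Let G = ℝ and consider the translation action α of ℝ on M = L^∞(ℝ). Then for any free ultrafilter ω on ℕ, the equicontinuous part M_α^ω of the ultraproduct coincides with the copy of M given by constant sequences. Concretely: if (f^ν) is a bounded sequence in L^∞(ℝ) and g ∈ L^1(ℝ), then the sequence (g * f^ν) agrees modulo ω-trivial sequences with the constant sequence g * f, where f = weak-* lim_{ν→ω} f^ν. -/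
open MeasureTheory Filter Topology

/-- Continuity of translation in `L¹(ℝ)`: the `L¹` distance between `g(· + r)` and `g`
tends to `0` as `r → 0`. -/
lemma l1_translate_cont {g : ℝ → ℂ} (hg : Integrable g) {ε : ℝ} (hε : 0 < ε) :
    ∃ δ > 0, ∀ r : ℝ, |r| < δ → ∫ x, ‖g (x + r) - g x‖ < ε := by
  set G : Lp ℂ 1 (volume : Measure ℝ) := hg.toL1 g with hG
  set cm : ℝ → C(ℝ, ℝ) := fun r => ⟨fun x => x + r, by continuity⟩ with hcm
  have cmc : Continuous cm := by
    apply ContinuousMap.continuous_of_continuous_uncurry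
    exact continuous_snd.add continuous_fst
  have mp : ∀ r : ℝ, MeasurePreserving (cm r) volume volume := fun r =>
    measurePreserving_add_right volume r
  have ht : Tendsto (fun r => Lp.compMeasurePreserving (cm r) (mp r) G) (𝓝 0)
      (𝓝 (Lp.compMeasurePreserving (cm 0) (mp 0) G)) :=
    Filter.Tendsto.compMeasurePreservingLp tendsto_const_nhds (cmc.tendsto 0) mp (mp 0)
      (by norm_num)
  have hcoe : ∀ r : ℝ, (Lp.compMeasurePreserving (cm r) (mp r) G : ℝ → ℂ)
      =ᵐ[volume] fun x => g (x + r) := by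
    intro r
    have h1 := Lp.coeFn_compMeasurePreserving G (mp r)
    have h2 := (mp r).quasiMeasurePreserving.ae_eq (hg.coeFn_toL1)
    filter_upwards [h1, h2] with x hx hx'
    calc (Lp.compMeasurePreserving (cm r) (mp r) G : ℝ → ℂ) x
        = (G : ℝ → ℂ) (cm r x) := hx
      _ = g (cm r x) := hx'
      _ = g (x + r) := rfl
  have key : ∀ r : ℝ, ∫ x, ‖g (x + r) - g x‖
      = dist (Lp.compMeasurePreserving (cm r) (mp r) G)
          (Lp.compMeasurePreserving (cm 0) (mp 0) G) := by
    intro r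
    rw [L1.dist_eq_integral_dist]
    refine integral_congr_ae ?_
    filter_upwards [hcoe r, hcoe 0] with x hx hx'
    rw [hx, hx', dist_eq_norm, add_zero]
  have := Metric.tendsto_nhds.mp ht ε hε
  rw [Metric.eventually_nhds_iff] at this
  obtain ⟨δ, hδ, hδ'⟩ := this
  refine ⟨δ, hδ, fun r hr => ?_⟩
  rw [key r]
  simpa using hδ' (show dist r 0 < δ by simpa [Real.dist_eq] using hr)

/-- for the translation action of `ℝ` on `L^∞(ℝ)`, the equicontinuous part of
the ultraproduct reduces to constant sequences: if `(fν)` is a uniformly bounded sequence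
of functions with weak-* ultralimit `f` (tested against `L¹`), and `g ∈ L¹(ℝ)`, then the
averaged sequence `(g * fν)` agrees modulo ω-trivial sequences with the constant sequence
`g * f`; concretely `g * fν → g * f` along `ω` uniformly on every compact set. -/
theorem statement13 (ω : Ultrafilter ℕ)
    (hfree : (Filter.cofinite : Filter ℕ) ≤ (ω : Filter ℕ))
    (C : ℝ) (fν : ℕ → ℝ → ℂ) (f : ℝ → ℂ)
    (hmeas : ∀ ν, Measurable (fν ν)) (hfmeas : Measurable f)
    (hbdd : ∀ ν s, ‖fν ν s‖ ≤ C) (hfb : ∀ s, ‖f s‖ ≤ C)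
    (hweak : ∀ h : ℝ → ℂ, Integrable h →
      Tendsto (fun ν => ∫ s, h s * fν ν s) (ω : Filter ℕ) (nhds (∫ s, h s * f s)))
    (g : ℝ → ℂ) (hg : Integrable g)
    (K : Set ℝ) (hK : IsCompact K) :
    TendstoUniformlyOn (fun ν t => ∫ s, g s * fν ν (t - s))
      (fun t => ∫ s, g s * f (t - s)) (ω : Filter ℕ) K := by
  have hC : 0 ≤ C := le_trans (norm_nonneg _) (hbdd 0 0)
  -- integrability of the convolved integrands
  have hint : ∀ (F : ℝ → ℂ), Measurable F → (∀ s, ‖F s‖ ≤ C) → ∀ t : ℝ,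
      Integrable (fun s => g (t - s) * F s) := by
    intro F hF hFb t
    have := (hg.comp_sub_left t).bdd_mul hF.aestronglyMeasurable (Filter.Eventually.of_forall hFb)
    simpa [mul_comm] using this
  -- change of variables
  have hswap : ∀ (F : ℝ → ℂ) (t : ℝ), ∫ s, g s * F (t - s) = ∫ s, g (t - s) * F s := by
    intro F t
    have h := integral_sub_left_eq_self (μ := volume) (fun s => g (t - s) * F s) t
    simp only [sub_sub_cancel] at h
    exact h
  -- equicontinuity estimate, uniform in the bounded function F
  have hequi : ∀ (F : ℝ → ℂ), Measurable F → (∀ s, ‖F s‖ ≤ C) → ∀ t t' : ℝ,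
      ‖(∫ s, g (t - s) * F s) - ∫ s, g (t' - s) * F s‖
        ≤ C * ∫ x, ‖g (x + (t - t')) - g x‖ := by
    intro F hF hFb t t'
    rw [← integral_sub (hint F hF hFb t) (hint F hF hFb t')]
    have hgdiff : Integrable (fun s => g (t - s) - g (t' - s)) :=
      (hg.comp_sub_left t).sub (hg.comp_sub_left t')
    calc ‖∫ s, (g (t - s) * F s - g (t' - s) * F s)‖
        ≤ ∫ s, ‖g (t - s) * F s - g (t' - s) * F s‖ := norm_integral_le_integral_norm _
      _ ≤ ∫ s, ‖g (t - s) - g (t' - s)‖ * C := by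
          refine integral_mono_of_nonneg (Filter.Eventually.of_forall fun s => norm_nonneg _)
            (hgdiff.norm.mul_const C) (Filter.Eventually.of_forall fun s => ?_)
          show ‖g (t - s) * F s - g (t' - s) * F s‖ ≤ ‖g (t - s) - g (t' - s)‖ * C
          rw [← sub_mul, norm_mul]
          exact mul_le_mul_of_nonneg_left (hFb s) (norm_nonneg _)
      _ = C * ∫ s, ‖g (t - s) - g (t' - s)‖ := by rw [integral_mul_const]; ring
      _ = C * ∫ x, ‖g (x + (t - t')) - g x‖ := by
          congr 1
          have h := integral_sub_left_eq_self (μ := volume)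
            (fun x => ‖g (x + (t - t')) - g x‖) t'
          have h2 : ∀ s : ℝ, t' - s + (t - t') = t - s := fun s => by ring
          simp only [h2] at h
          exact h
  -- pointwise convergence along ω
  have hpt : ∀ t : ℝ, Tendsto (fun ν => ∫ s, g (t - s) * fν ν s) (ω : Filter ℕ)
      (𝓝 (∫ s, g (t - s) * f s)) := fun t => hweak _ (hg.comp_sub_left t)
  -- rewrite everything via change of variables
  have hrw1 : (fun ν t => ∫ s, g s * fν ν (t - s))
      = fun ν t => ∫ s, g (t - s) * fν ν s := by
    funext ν t; exact hswap _ t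
  have hrw2 : (fun t => ∫ s, g s * f (t - s)) = fun t => ∫ s, g (t - s) * f s := by
    funext t; exact hswap _ t
  rw [hrw1, hrw2]
  rw [Metric.tendstoUniformlyOn_iff]
  intro ε hε
  obtain ⟨δ, hδ, hδ'⟩ := l1_translate_cont hg (show 0 < ε / (3 * (C + 1)) by positivity)
  have hcover : K ⊆ ⋃ x ∈ K, Metric.ball x δ := fun x hx =>
    Set.mem_biUnion hx (Metric.mem_ball_self hδ)
  obtain ⟨b', hb'K, hb'fin, hb'cover⟩ :=
    hK.elim_finite_subcover_image (fun x _ => Metric.isOpen_ball) hcover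
  have hev : ∀ᶠ ν in (ω : Filter ℕ), ∀ i ∈ b',
      dist (∫ s, g (i - s) * fν ν s) (∫ s, g (i - s) * f s) < ε / 3 := by
    rw [eventually_all_finite hb'fin]
    intro i _
    exact Metric.tendsto_nhds.mp (hpt i) (ε / 3) (by positivity)
  filter_upwards [hev] with ν hν
  intro t ht
  obtain ⟨i, hi, hti⟩ := Set.mem_iUnion₂.mp (hb'cover ht)
  have htidist : |t - i| < δ := by
    have := Metric.mem_ball.mp hti
    rwa [Real.dist_eq] at this
  have hT : ∫ x, ‖g (x + (t - i)) - g x‖ < ε / (3 * (C + 1)) := hδ' _ htidist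
  have hTnonneg : 0 ≤ ∫ x, ‖g (x + (t - i)) - g x‖ :=
    integral_nonneg fun x => norm_nonneg _
  have hstep : C * ∫ x, ‖g (x + (t - i)) - g x‖ < ε / 3 := by
    calc C * ∫ x, ‖g (x + (t - i)) - g x‖
        ≤ (C + 1) * ∫ x, ‖g (x + (t - i)) - g x‖ :=
          mul_le_mul_of_nonneg_right (by linarith) hTnonneg
      _ < (C + 1) * (ε / (3 * (C + 1))) := by
          exact mul_lt_mul_of_pos_left hT (by linarith)
      _ = ε / 3 := by field_simp
  have h1 : dist (∫ s, g (t - s) * f s) (∫ s, g (i - s) * f s) < ε / 3 := by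
    rw [dist_eq_norm]
    exact lt_of_le_of_lt (hequi f hfmeas hfb t i) hstep
  have h3 : dist (∫ s, g (i - s) * fν ν s) (∫ s, g (t - s) * fν ν s) < ε / 3 := by
    rw [dist_eq_norm, ← norm_neg, neg_sub]
    exact lt_of_le_of_lt (hequi (fν ν) (hmeas ν) (hbdd ν) t i) hstep
  have h2 : dist (∫ s, g (i - s) * f s) (∫ s, g (i - s) * fν ν s) < ε / 3 :=
    (dist_comm (∫ s, g (i - s) * fν ν s) (∫ s, g (i - s) * f s)) ▸ hν i hi
  calc dist (∫ s, g (t - s) * f s) (∫ s, g (t - s) * fν ν s)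
      ≤ dist (∫ s, g (t - s) * f s) (∫ s, g (i - s) * f s)
        + dist (∫ s, g (i - s) * f s) (∫ s, g (i - s) * fν ν s)
        + dist (∫ s, g (i - s) * fν ν s) (∫ s, g (t - s) * fν ν s) := dist_triangle4 _ _ _ _
    _ < ε / 3 + ε / 3 + ε / 3 := by exact add_lt_add (add_lt_add h1 h2) h3
    _ = ε := by ring
end
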